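/- Let f : ℝ^n → ℝ^n, g : ℝ^n → ℝ^{n×m}, and μ : ℝ^n → ℝ^m. Then f(x) + g(x)μ(x) ∈ T_D(x) holds for all x ∈ ∂D if and only if for all x ∈ ∂D there exists S ∈ S(x) such that: (W̄_{i-1}(S) W_{ij})·(f(x) + g(x)μ(x)) ≥ 0 for all (i,j) ∈ T(x) with j ∈ S_i; (W̄_{i-1}(S) W_{ij})·(f(x) + g(x)μ(x)) ≤ 0 for all (i,j) ∈ T(x) with j ∉ S_i; and W̄(S)·(f(x) + g(x)μ(x)) ≥ 0 (with the convention that W̄_0(S) is the n × n identity matrix). -/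

import Mathlib

/-- A feedforward ReLU network with `L` layers. `d 0` is the input dimension `n`;
`d i` is the width `M_i` of layer `i` for `1 ≤ i ≤ L`. `W i j : Fin (d i) → ℝ` is the
weight vector of neuron `j` in layer `i+1` (paper layer `i+1`), `r i j` its bias,
`Ω` the output weights and `ψ` the output bias. -/
structure ReluNet where
  L : ℕ
  hL : 1 ≤ L
  d : ℕ → ℕ
  W : (i : ℕ) → Fin (d (i + 1)) → Fin (d i) → ℝ
  r : (i : ℕ) → Fin (d (i + 1)) → ℝ
  Ω : Fin (d L) → ℝ
  ψ : ℝ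

namespace ReluNet

open Classical

/-- Layer outputs: `z N i x` is the output vector of paper layer `i` (`z N 0 x = x`). -/
def z (N : ReluNet) : (i : ℕ) → (Fin (N.d 0) → ℝ) → Fin (N.d i) → ℝ
  | 0, x => x
  | i + 1, x => fun j => max 0 ((∑ k, N.W i j k * z N i x k) + N.r i j)

/-- Pre-activation input of neuron `(i+1, j)` (paper indexing) at input `x`. -/
def pre (N : ReluNet) (i : ℕ) (j : Fin (N.d (i + 1))) (x : Fin (N.d 0) → ℝ) : ℝ :=
  (∑ k, N.W i j k * N.z i x k) + N.r i j

/-- The network output `b(x) = Ω ⬝ z_L(x) + ψ`. -/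
def b (N : ReluNet) (x : Fin (N.d 0) → ℝ) : ℝ :=
  (∑ j, N.Ω j * N.z N.L x j) + N.ψ

/-- An activation set: a set of neurons in each layer (`S i` lives in paper layer `i+1`). -/
abbrev ActSet (N : ReluNet) := (i : ℕ) → Set (Fin (N.d (i + 1)))

/-- The activation region `X̄(S)`: inputs whose pre-activation at neuron `(i,j)` is `≥ 0`
for `j ∈ S_i` and `≤ 0` for `j ∉ S_i`. -/
def region (N : ReluNet) (S : N.ActSet) : Set (Fin (N.d 0) → ℝ) :=
  {x | ∀ i < N.L, ∀ j : Fin (N.d (i + 1)),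
      (j ∈ S i → 0 ≤ N.pre i j x) ∧ (j ∉ S i → N.pre i j x ≤ 0)}

/-- `Wbar N S i j` is the column `W̄_{ij}(S) ∈ ℝ^n` (paper layer `i`); `Wbar N S 0` is the
identity matrix convention `W̄_0(S) = I`. -/
noncomputable def Wbar (N : ReluNet) (S : N.ActSet) : (i : ℕ) → Fin (N.d i) → Fin (N.d 0) → ℝ
  | 0, j => fun k => if k = j then 1 else 0
  | i + 1, j =>
      if j ∈ S i then (fun k => ∑ j', N.W i j j' * Wbar N S i j' k) else 0

/-- `rbar N S i j` is `r̄_{ij}(S)` (paper layer `i`); `rbar N S 0 = 0` by convention. -/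
noncomputable def rbar (N : ReluNet) (S : N.ActSet) : (i : ℕ) → Fin (N.d i) → ℝ
  | 0, _ => 0
  | i + 1, j =>
      if j ∈ S i then (∑ j', N.W i j j' * rbar N S i j') + N.r i j else 0

/-- `W̄(S) = W̄_L(S) Ω ∈ ℝ^n`. -/
noncomputable def WbarOut (N : ReluNet) (S : N.ActSet) : Fin (N.d 0) → ℝ :=
  fun k => ∑ j, N.Ω j * N.Wbar S N.L j k

/-- `r̄(S) = Ω ⬝ r̄_L(S) + ψ`. -/
noncomputable def rbarOut (N : ReluNet) (S : N.ActSet) : ℝ :=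
  (∑ j, N.Ω j * N.rbar S N.L j) + N.ψ

/-- `gradW N S i j = W̄_i(S) W_{(i+1)j} ∈ ℝ^n` (paper: `W̄_{i-1}(S) W_{ij}` for neuron
`(i,j)` with `i = ` my `i+1`). -/
noncomputable def gradW (N : ReluNet) (S : N.ActSet) (i : ℕ) (j : Fin (N.d (i + 1))) :
    Fin (N.d 0) → ℝ :=
  fun k => ∑ j', N.W i j j' * N.Wbar S i j' k

end ReluNet

/-- Euclidean distance from a point to a set in `ℝ^n` (it is `0` for the empty set,
matching the convention of `Metric.infDist`). -/
noncomputable def eInfDist {n : ℕ} (x : Fin n → ℝ) (A : Set (Fin n → ℝ)) : ℝ :=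
  sInf ((fun y => Real.sqrt (∑ k, (x k - y k) ^ 2)) '' A)

/-- The tangent cone `T_A(x) = {z : liminf_{τ→0⁺} dist(x + τz, A)/τ = 0}`, with `dist`
the Euclidean distance from a point to a set. -/
noncomputable def tangentCone {n : ℕ} (A : Set (Fin n → ℝ)) (x : Fin n → ℝ) :
    Set (Fin n → ℝ) :=
  {z | Filter.liminf (fun τ : ℝ => eInfDist (x + τ • z) A / τ)
        (nhdsWithin 0 (Set.Ioi 0)) = 0}



lemma eInfDist_nonneg {n : ℕ} (x : Fin n → ℝ) (A : Set (Fin n → ℝ)) : 0 ≤ eInfDist x A := by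
  apply Real.sInf_nonneg
  rintro _ ⟨y, -, rfl⟩
  exact Real.sqrt_nonneg _

lemma eInfDist_zero_of_mem {n : ℕ} {x : Fin n → ℝ} {A : Set (Fin n → ℝ)} (hx : x ∈ A) :
    eInfDist x A = 0 := by
  refine le_antisymm ?_ (eInfDist_nonneg x A)
  have h0 : (0:ℝ) ∈ (fun y => Real.sqrt (∑ k, (x k - y k) ^ 2)) '' A := by
    refine ⟨x, hx, ?_⟩
    simp
  exact csInf_le ⟨0, by rintro _ ⟨y, -, rfl⟩; exact Real.sqrt_nonneg _⟩ h0

lemma eInfDist_component_bound {n : ℕ} {x y : Fin n → ℝ} (k : Fin n) :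
    |x k - y k| ≤ Real.sqrt (∑ k', (x k' - y k') ^ 2) := by
  rw [← Real.sqrt_sq_eq_abs]
  apply Real.sqrt_le_sqrt
  exact Finset.single_le_sum (f := fun k' => (x k' - y k') ^ 2)
    (fun i _ => sq_nonneg _) (Finset.mem_univ k)

lemma abs_sum_mul_le {n : ℕ} (w e : Fin n → ℝ) {ε : ℝ} (he : ∀ k, |e k| ≤ ε) :
    |∑ k, w k * e k| ≤ (∑ k, |w k|) * ε := by
  calc |∑ k, w k * e k| ≤ ∑ k, |w k * e k| := Finset.abs_sum_le_sum_abs _ _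
    _ ≤ ∑ k, |w k| * ε := by
        refine Finset.sum_le_sum fun k _ => ?_
        rw [abs_mul]
        exact mul_le_mul_of_nonneg_left (he k) (abs_nonneg _)
    _ = (∑ k, |w k|) * ε := by rw [Finset.sum_mul]

lemma key_ineq {n : ℕ} (w v x : Fin n → ℝ) (u : ℕ → Fin n → ℝ) (t : ℕ → ℝ)
    (ht : ∀ m, 0 < t m)
    (he : ∀ m k, |u m k - x k - t m * v k| ≤ t m * ((1:ℝ) / (m + 1)))
    (h0 : ∀ m, 0 ≤ ∑ k, w k * (u m k - x k)) :
    0 ≤ ∑ k, w k * v k := by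
  set c := ∑ k, w k * v k with hc
  set C := ∑ k, |w k| with hC
  have hCnn : 0 ≤ C := Finset.sum_nonneg fun k _ => abs_nonneg _
  have key : ∀ m : ℕ, -(C * ((1:ℝ) / (m + 1))) ≤ c := by
    intro m
    have hsplit : ∑ k, w k * (u m k - x k)
        = t m * c + ∑ k, w k * (u m k - x k - t m * v k) := by
      rw [hc, Finset.mul_sum, ← Finset.sum_add_distrib]
      congr 1; ext k; ring
    have hb : |∑ k, w k * (u m k - x k - t m * v k)| ≤ C * (t m * ((1:ℝ) / (m + 1))) :=
      abs_sum_mul_le _ _ (he m)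
    have h1 : 0 ≤ t m * c + ∑ k, w k * (u m k - x k - t m * v k) := hsplit ▸ h0 m
    have h2 : -(C * (t m * ((1:ℝ) / (m + 1)))) ≤ ∑ k, w k * (u m k - x k - t m * v k) :=
      neg_le_of_abs_le hb |>.trans_eq rfl
    have hub : ∑ k, w k * (u m k - x k - t m * v k) ≤ C * (t m * ((1:ℝ) / (m + 1))) :=
      le_of_abs_le hb
    have h4 : 0 ≤ t m * (c + C * ((1:ℝ) / (m + 1))) := by nlinarith
    have h5 : 0 ≤ c + C * ((1:ℝ) / (m + 1)) := nonneg_of_mul_nonneg_right h4 (ht m)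
    linarith
  have hlim : Filter.Tendsto (fun m : ℕ => -(C * ((1:ℝ) / (m + 1)))) Filter.atTop (nhds 0) := by
    have := tendsto_one_div_add_atTop_nhds_zero_nat (𝕜 := ℝ)
    have h := (this.const_mul C).neg
    simpa using h
  exact le_of_tendsto hlim (Filter.Eventually.of_forall key)
namespace ReluNet

variable (N : ReluNet)

lemma continuous_z (i : ℕ) : Continuous fun x : Fin (N.d 0) → ℝ => N.z i x := by
  induction i with
  | zero => exact continuous_id
  | succ i ih =>
    apply continuous_pi; intro j
    show Continuous fun x => max 0 ((∑ k, N.W i j k * N.z i x k) + N.r i j)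
    refine continuous_const.max (Continuous.add ?_ continuous_const)
    exact continuous_finset_sum _ fun k _ =>
      continuous_const.mul ((continuous_apply k).comp ih)

lemma continuous_pre (i : ℕ) (j : Fin (N.d (i + 1))) :
    Continuous fun x : Fin (N.d 0) → ℝ => N.pre i j x := by
  unfold pre
  refine Continuous.add ?_ continuous_const
  exact continuous_finset_sum _ fun k _ =>
    continuous_const.mul ((continuous_apply k).comp (N.continuous_z i))

lemma continuous_b : Continuous N.b := by
  unfold b
  refine Continuous.add ?_ continuous_const
  exact continuous_finset_sum _ fun k _ =>
    continuous_const.mul ((continuous_apply k).comp (N.continuous_z N.L))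

/-- Conditions of the activation region, restricted to layers `< i`. -/
def preOK (S : N.ActSet) (i : ℕ) (x : Fin (N.d 0) → ℝ) : Prop :=
  ∀ i' < i, ∀ j : Fin (N.d (i' + 1)),
    (j ∈ S i' → 0 ≤ N.pre i' j x) ∧ (j ∉ S i' → N.pre i' j x ≤ 0)

lemma preOK_mono {S : N.ActSet} {i i' : ℕ} (h : i' ≤ i) {x} (hx : N.preOK S i x) :
    N.preOK S i' x := fun a ha => hx a (lt_of_lt_of_le ha h)

lemma region_iff {S : N.ActSet} {x} : x ∈ N.region S ↔ N.preOK S N.L x := Iff.rfl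

/-- The linear form of the pre-activation on an activation region. -/
noncomputable def linPre (S : N.ActSet) (i : ℕ) (j : Fin (N.d (i + 1)))
    (x : Fin (N.d 0) → ℝ) : ℝ :=
  (∑ k, N.gradW S i j k * x k) + ((∑ j', N.W i j j' * N.rbar S i j') + N.r i j)

/-- The linear form of `b` on an activation region. -/
noncomputable def linB (S : N.ActSet) (x : Fin (N.d 0) → ℝ) : ℝ :=
  (∑ k, N.WbarOut S k * x k) + N.rbarOut S

lemma sum_W_z (S : N.ActSet) (i : ℕ) (x : Fin (N.d 0) → ℝ)
    (hzi : ∀ j' : Fin (N.d i), N.z i x j' = (∑ k, N.Wbar S i j' k * x k) + N.rbar S i j')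
    (j : Fin (N.d (i + 1))) :
    ∑ k, N.W i j k * N.z i x k
      = (∑ k, N.gradW S i j k * x k) + ∑ j', N.W i j j' * N.rbar S i j' := by
  simp only [hzi, mul_add, Finset.sum_add_distrib, Finset.mul_sum]
  rw [Finset.sum_comm]
  unfold gradW
  simp only [Finset.sum_mul]
  congr 1
  refine Finset.sum_congr rfl fun k _ => Finset.sum_congr rfl fun k' _ => by ring

lemma z_linear (S : N.ActSet) : ∀ (i : ℕ) (x : Fin (N.d 0) → ℝ), N.preOK S i x →
    ∀ j : Fin (N.d i), N.z i x j = (∑ k, N.Wbar S i j k * x k) + N.rbar S i j := by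
  intro i
  induction i with
  | zero =>
    intro x _ j
    simp [z, Wbar, rbar]
  | succ i ih =>
    intro x hx j
    have hzi := ih x (N.preOK_mono (Nat.le_succ i) hx)
    have hpre : N.pre i j x = (∑ k, N.gradW S i j k * x k)
        + ((∑ j', N.W i j j' * N.rbar S i j') + N.r i j) := by
      unfold pre
      rw [N.sum_W_z S i x hzi j, add_assoc]
    have hz : N.z (i + 1) x j = max 0 (N.pre i j x) := rfl
    by_cases hj : j ∈ S i
    · have h0 : 0 ≤ N.pre i j x := (hx i (Nat.lt_succ_self i) j).1 hj
      rw [hz, max_eq_right h0, hpre]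
      simp only [Wbar, rbar, if_pos hj]
      rfl
    · have h0 : N.pre i j x ≤ 0 := (hx i (Nat.lt_succ_self i) j).2 hj
      rw [hz, max_eq_left h0]
      simp [Wbar, rbar, if_neg hj]

lemma pre_linear (S : N.ActSet) (i : ℕ) (x : Fin (N.d 0) → ℝ) (hx : N.preOK S i x)
    (j : Fin (N.d (i + 1))) : N.pre i j x = N.linPre S i j x := by
  unfold pre linPre
  rw [N.sum_W_z S i x (N.z_linear S i x hx) j, add_assoc]

lemma b_linear (S : N.ActSet) (x : Fin (N.d 0) → ℝ) (hx : N.preOK S N.L x) :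
    N.b x = N.linB S x := by
  unfold b linB WbarOut rbarOut
  have hz := N.z_linear S N.L x hx
  simp only [hz, mul_add, Finset.sum_add_distrib, Finset.mul_sum]
  rw [Finset.sum_comm]
  simp only [Finset.sum_mul]
  rw [← add_assoc]
  congr 2
  refine Finset.sum_congr rfl fun k _ => Finset.sum_congr rfl fun k' _ => by ring

lemma preOK_of_linPre (S : N.ActSet) (x : Fin (N.d 0) → ℝ)
    (h : ∀ i < N.L, ∀ j : Fin (N.d (i + 1)),
      (j ∈ S i → 0 ≤ N.linPre S i j x) ∧ (j ∉ S i → N.linPre S i j x ≤ 0)) :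
    N.preOK S N.L x := by
  have main : ∀ i, i ≤ N.L → N.preOK S i x := by
    intro i
    induction i with
    | zero => intro _ i' hi' ; omega
    | succ i ih =>
      intro hle
      have hi : N.preOK S i x := ih (Nat.le_of_succ_le hle)
      intro i' hi' j
      rcases Nat.lt_succ_iff_lt_or_eq.mp hi' with h' | rfl
      · exact hi i' h' j
      · rw [N.pre_linear S i' x hi j]
        exact h i' (Nat.lt_of_succ_le hle) j
  exact main N.L le_rfl

end ReluNet

lemma sum_add_smul {n : ℕ} (w x v : Fin n → ℝ) (τ : ℝ) :
    ∑ k, w k * (x + τ • v) k = (∑ k, w k * x k) + τ * ∑ k, w k * v k := by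
  simp only [Pi.add_apply, Pi.smul_apply, smul_eq_mul, mul_add, Finset.sum_add_distrib,
    Finset.mul_sum]
  congr 1
  exact Finset.sum_congr rfl fun k _ => by ring

lemma tendsto_affine (a c : ℝ) :
    Filter.Tendsto (fun t : ℝ => a + t * c) (nhds 0) (nhds a) := by
  have h1 : Filter.Tendsto (fun t : ℝ => t * c) (nhds 0) (nhds (0 * c)) :=
    Filter.tendsto_id.mul tendsto_const_nhds
  rw [zero_mul] at h1
  have h2 := h1.const_add a
  rwa [add_zero] at h2

lemma sum_mul_sub {n : ℕ} (w y x : Fin n → ℝ) :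
    ∑ k, w k * (y k - x k) = (∑ k, w k * y k) - ∑ k, w k * x k := by
  simp [mul_sub, Finset.sum_sub_distrib]

open Filter in
lemma ReluNet.main_iff (N : ReluNet) (x v : Fin (N.d 0) → ℝ)
    (hx : x ∈ frontier {y : Fin (N.d 0) → ℝ | 0 ≤ N.b y}) :
    v ∈ tangentCone {y : Fin (N.d 0) → ℝ | 0 ≤ N.b y} x ↔
      ∃ S : N.ActSet, x ∈ N.region S ∧
        (∀ i < N.L, ∀ j : Fin (N.d (i + 1)), N.pre i j x = 0 → j ∈ S i →
            0 ≤ ∑ k, N.gradW S i j k * v k) ∧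
        (∀ i < N.L, ∀ j : Fin (N.d (i + 1)), N.pre i j x = 0 → j ∉ S i →
            (∑ k, N.gradW S i j k * v k) ≤ 0) ∧
        0 ≤ ∑ k, N.WbarOut S k * v k := by
  set D := {y : Fin (N.d 0) → ℝ | 0 ≤ N.b y} with hD
  have hDc : IsClosed D := isClosed_le continuous_const N.continuous_b
  have hx' : x ∈ D \ interior D := by rw [← hDc.frontier_eq]; exact hx
  have hxD : x ∈ D := hx'.1
  have hxb : (0:ℝ) ≤ N.b x := hxD
  have hbx : N.b x = 0 := by
    rcases lt_or_eq_of_le hxb with h | h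
    · exact absurd (interior_maximal (fun y hy => le_of_lt hy)
        (isOpen_lt continuous_const N.continuous_b) h) hx'.2
    · exact h.symm
  constructor
  · -- forward direction
    intro hT
    have hT' : Filter.liminf (fun τ : ℝ => eInfDist (x + τ • v) D / τ)
        (nhdsWithin 0 (Set.Ioi 0)) = 0 := hT
    -- the quotient is bounded above by the Euclidean norm of v
    set Vn := Real.sqrt (∑ k, v k ^ 2) with hVn
    have hdistle : ∀ τ : ℝ, 0 < τ → eInfDist (x + τ • v) D ≤ τ * Vn := by
      intro τ hτ
      have hmem : Real.sqrt (∑ k, ((x + τ • v) k - x k) ^ 2)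
          ∈ (fun y => Real.sqrt (∑ k, ((x + τ • v) k - y k) ^ 2)) '' D := ⟨x, hxD, rfl⟩
      have hval : Real.sqrt (∑ k, ((x + τ • v) k - x k) ^ 2) = τ * Vn := by
        have : ∀ k, ((x + τ • v) k - x k) ^ 2 = τ ^ 2 * v k ^ 2 := by
          intro k; simp only [Pi.add_apply, Pi.smul_apply, smul_eq_mul]; ring
        rw [Finset.sum_congr rfl fun k _ => this k, ← Finset.mul_sum,
          Real.sqrt_mul (sq_nonneg τ), Real.sqrt_sq hτ.le]
      calc eInfDist (x + τ • v) D ≤ Real.sqrt (∑ k, ((x + τ • v) k - x k) ^ 2) :=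
            csInf_le ⟨0, by rintro _ ⟨y, -, rfl⟩; exact Real.sqrt_nonneg _⟩ hmem
        _ = τ * Vn := hval
    have hcb : Filter.IsCoboundedUnder (· ≥ ·) (nhdsWithin (0:ℝ) (Set.Ioi 0))
        (fun τ : ℝ => eInfDist (x + τ • v) D / τ) := by
      refine Filter.isCoboundedUnder_ge_of_eventually_le
        (nhdsWithin (0:ℝ) (Set.Ioi 0)) (x := Vn) ?_
      filter_upwards [self_mem_nhdsWithin] with τ hτ
      rw [div_le_iff₀ hτ]
      calc eInfDist (x + τ • v) D ≤ τ * Vn := hdistle τ hτ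
        _ = Vn * τ := mul_comm _ _
    have step : ∀ m : ℕ, ∃ τ : ℝ, ∃ y : Fin (N.d 0) → ℝ, 0 < τ ∧ τ < (1:ℝ) / (m + 1) ∧ y ∈ D ∧
        ∀ k, |y k - x k - τ * v k| ≤ τ * ((1:ℝ) / (m + 1)) := by
      intro m
      have hpos : (0:ℝ) < (1:ℝ) / (m + 1) := by positivity
      have freq : ∃ᶠ τ in nhdsWithin (0:ℝ) (Set.Ioi 0),
          eInfDist (x + τ • v) D / τ < (1:ℝ) / (m + 1) :=
        Filter.frequently_lt_of_liminf_lt hcb (by rw [hT']; exact hpos)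
      have ev : ∀ᶠ τ in nhdsWithin (0:ℝ) (Set.Ioi 0), τ ∈ Set.Ioo 0 ((1:ℝ) / (m + 1)) :=
        Ioo_mem_nhdsGT hpos
      obtain ⟨τ, hq, hτ0, hτ1⟩ := (freq.and_eventually ev).exists
      have hlt : eInfDist (x + τ • v) D < τ * ((1:ℝ) / (m + 1)) := by
        have := (div_lt_iff₀ hτ0).mp hq
        linarith [this]
      have hne : ((fun y => Real.sqrt (∑ k, ((x + τ • v) k - y k) ^ 2)) '' D).Nonempty :=
        ⟨_, ⟨x, hxD, rfl⟩⟩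
      unfold eInfDist at hlt
      obtain ⟨a, ⟨y, hyD, rfl⟩, ha⟩ := exists_lt_of_csInf_lt hne hlt
      refine ⟨τ, y, hτ0, hτ1, hyD, fun k => ?_⟩
      have h1 : |y k - x k - τ * v k| = |(x + τ • v) k - y k| := by
        rw [abs_sub_comm]
        congr 1
        simp only [Pi.add_apply, Pi.smul_apply, smul_eq_mul]
        ring
      rw [h1]
      exact (eInfDist_component_bound k).trans ha.le
    choose τ y hτpos hτlt hyD herr using step
    -- pigeonhole on activation patterns
    have : Finite ((i : Fin N.L) → Fin (N.d (i.1 + 1)) → Prop) := inferInstance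
    obtain ⟨P, hPinf'⟩ := Finite.exists_infinite_fiber
      (fun m (i : Fin N.L) (j : Fin (N.d (i.1 + 1))) => 0 ≤ N.pre i.1 j (y m))
    have hPinf : (_root_.Set.Infinite ((fun m (i : Fin N.L) (j : Fin (N.d (i.1 + 1))) =>
        0 ≤ N.pre i.1 j (y m)) ⁻¹' {P})) := Set.infinite_coe_iff.mp hPinf'
    choose φ hφmem hφgt using fun m => hPinf.exists_gt m
    have hFP : ∀ m, (fun (i : Fin N.L) (j : Fin (N.d (i.1 + 1))) =>
        0 ≤ N.pre i.1 j (y (φ m))) = P := fun m => hφmem m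
    set S : N.ActSet := fun i => if h : i < N.L then {j | P ⟨i, h⟩ j} else ∅ with hSdef
    have htp : ∀ m : ℕ, 0 < τ (φ m) := fun m => hτpos (φ m)
    have hfrac : ∀ m : ℕ, (1:ℝ) / (φ m + 1) ≤ (1:ℝ) / (m + 1) := by
      intro m
      apply one_div_le_one_div_of_le (by positivity)
      have : (m:ℝ) ≤ (φ m : ℝ) := Nat.cast_le.mpr (hφgt m).le
      linarith
    have he : ∀ m k, |y (φ m) k - x k - τ (φ m) * v k| ≤ τ (φ m) * ((1:ℝ) / (m + 1)) := by
      intro m k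
      exact (herr (φ m) k).trans (mul_le_mul_of_nonneg_left (hfrac m) (htp m).le)
    have htlt : ∀ m : ℕ, τ (φ m) ≤ (1:ℝ) / (m + 1) := fun m =>
      (hτlt (φ m)).le.trans (hfrac m)
    have hreg : ∀ m, y (φ m) ∈ N.region S := by
      intro m i hiL j
      have hSi : (j ∈ S i) ↔ (0 ≤ N.pre i j (y (φ m))) := by
        simp only [hSdef, dif_pos hiL, Set.mem_setOf_eq]
        rw [← hFP m]
      constructor
      · exact hSi.mp
      · intro hj
        by_contra hc
        exact hj (hSi.mpr (le_of_lt (lt_of_not_ge hc)))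
    have htend : Filter.Tendsto (fun m => y (φ m)) Filter.atTop (nhds x) := by
      rw [tendsto_pi_nhds]
      intro k
      have hb : ∀ m : ℕ, ‖y (φ m) k - x k‖ ≤ ((1:ℝ) / (m + 1)) * (|v k| + 1) := by
        intro m
        have h1 := he m k
        have h2 : |y (φ m) k - x k| ≤ τ (φ m) * ((1:ℝ) / (m + 1)) + τ (φ m) * |v k| := by
          have h5 := abs_add_le (y (φ m) k - x k - τ (φ m) * v k) (τ (φ m) * v k)
          rw [sub_add_cancel] at h5
          calc |y (φ m) k - x k| ≤ _ := h5
            _ ≤ τ (φ m) * ((1:ℝ) / (m + 1)) + τ (φ m) * |v k| := by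
                rw [abs_mul, abs_of_pos (htp m)]
                exact add_le_add h1 le_rfl
        have h3 : ((1:ℝ) / (m + 1)) ≤ 1 := by
          rw [div_le_one (by positivity)]
          have : (0:ℝ) ≤ (m:ℝ) := Nat.cast_nonneg m
          linarith
        have h4 : τ (φ m) ≤ (1:ℝ) / (m + 1) := htlt m
        have h6 : (0:ℝ) < τ (φ m) := htp m
        have h7 : (0:ℝ) ≤ |v k| := abs_nonneg _
        rw [Real.norm_eq_abs]
        nlinarith [mul_le_mul_of_nonneg_right h4 h7]
      have hz : Filter.Tendsto (fun m : ℕ => y (φ m) k - x k) Filter.atTop (nhds 0) := by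
        apply squeeze_zero_norm hb
        have h := tendsto_one_div_add_atTop_nhds_zero_nat.mul_const (|v k| + 1)
        simpa using h
      have := hz.add_const (x k)
      simpa using this
    have hxreg : x ∈ N.region S := by
      intro i hiL j
      have hc := ((N.continuous_pre i j).tendsto x).comp htend
      constructor
      · intro hj
        exact ge_of_tendsto' hc fun m => ((hreg m) i hiL j).1 hj
      · intro hj
        exact le_of_tendsto' hc fun m => ((hreg m) i hiL j).2 hj
    refine ⟨S, hxreg, ?_, ?_, ?_⟩
    · intro i hiL j hpre0 hj
      refine key_ineq (N.gradW S i j) v x (fun m => y (φ m)) (fun m => τ (φ m)) htp he ?_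
      intro m
      have hOKu : N.preOK S i (y (φ m)) := N.preOK_mono (le_of_lt hiL) (hreg m)
      have hOKx : N.preOK S i x := N.preOK_mono (le_of_lt hiL) hxreg
      have hdiff : ∑ k, N.gradW S i j k * (y (φ m) k - x k)
          = N.pre i j (y (φ m)) - N.pre i j x := by
        rw [sum_mul_sub, N.pre_linear S i _ hOKu j, N.pre_linear S i x hOKx j]
        unfold ReluNet.linPre
        ring
      rw [hdiff, hpre0, sub_zero]
      exact ((hreg m) i hiL j).1 hj
    · intro i hiL j hpre0 hj
      have hneg : ∑ k, -N.gradW S i j k * v k = -∑ k, N.gradW S i j k * v k := by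
        simp [neg_mul]
      have h := key_ineq (fun k => -N.gradW S i j k) v x
        (fun m => y (φ m)) (fun m => τ (φ m)) htp he ?_
      · rw [hneg] at h
        linarith
      intro m
      have hOKu : N.preOK S i (y (φ m)) := N.preOK_mono (le_of_lt hiL) (hreg m)
      have hOKx : N.preOK S i x := N.preOK_mono (le_of_lt hiL) hxreg
      have hdiff : ∑ k, -N.gradW S i j k * (y (φ m) k - x k)
          = -(N.pre i j (y (φ m)) - N.pre i j x) := by
        have : ∑ k, -N.gradW S i j k * (y (φ m) k - x k)
            = -∑ k, N.gradW S i j k * (y (φ m) k - x k) := by simp [neg_mul]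
        rw [this, sum_mul_sub, N.pre_linear S i _ hOKu j, N.pre_linear S i x hOKx j]
        unfold ReluNet.linPre
        ring
      rw [hdiff, hpre0, sub_zero]
      have := ((hreg m) i hiL j).2 hj
      linarith
    · refine key_ineq (N.WbarOut S) v x (fun m => y (φ m)) (fun m => τ (φ m)) htp he ?_
      intro m
      have hdiff : ∑ k, N.WbarOut S k * (y (φ m) k - x k) = N.b (y (φ m)) - N.b x := by
        rw [sum_mul_sub, N.b_linear S _ (hreg m), N.b_linear S x hxreg]
        unfold ReluNet.linB
        ring
      rw [hdiff, hbx, sub_zero]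
      exact hyD (φ m)
  · rintro ⟨S, hxS, hg1, hg2, hg3⟩
    have hOKx : N.preOK S N.L x := hxS
    have hlinadd : ∀ (i : ℕ), i < N.L → ∀ (j : Fin (N.d (i + 1))) (τ : ℝ),
        N.linPre S i j (x + τ • v) = N.pre i j x + τ * ∑ k, N.gradW S i j k * v k := by
      intro i hiL j τ
      rw [N.pre_linear S i x (N.preOK_mono (le_of_lt hiL) hOKx) j]
      unfold ReluNet.linPre
      rw [sum_add_smul]
      ring
    have hper : ∀ p : Σ i : Fin N.L, Fin (N.d (i.1 + 1)),
        ∀ᶠ τ in nhdsWithin (0:ℝ) (Set.Ioi 0),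
          ((p.2 ∈ S p.1.1 → 0 ≤ N.linPre S p.1.1 p.2 (x + τ • v)) ∧
           (p.2 ∉ S p.1.1 → N.linPre S p.1.1 p.2 (x + τ • v) ≤ 0)) := by
      rintro ⟨⟨i, hiL⟩, j⟩
      simp only [hlinadd i hiL j]
      by_cases hj : j ∈ S i
      · have hge : 0 ≤ N.pre i j x := (hxS i hiL j).1 hj
        rcases eq_or_lt_of_le hge with heq | hlt
        · have hc : 0 ≤ ∑ k, N.gradW S i j k * v k := hg1 i hiL j heq.symm hj
          filter_upwards [self_mem_nhdsWithin] with t ht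
          refine ⟨fun _ => ?_, fun h => absurd hj h⟩
          have : 0 ≤ t * ∑ k, N.gradW S i j k * v k := mul_nonneg (le_of_lt ht) hc
          linarith
        · have hcont := tendsto_affine (N.pre i j x) (∑ k, N.gradW S i j k * v k)
          have hev := hcont.eventually_const_lt hlt
          filter_upwards [hev.filter_mono nhdsWithin_le_nhds] with t ht
          exact ⟨fun _ => le_of_lt ht, fun h => absurd hj h⟩
      · have hle : N.pre i j x ≤ 0 := (hxS i hiL j).2 hj
        rcases eq_or_lt_of_le hle with heq | hlt
        · have hc : ∑ k, N.gradW S i j k * v k ≤ 0 := hg2 i hiL j heq hj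
          filter_upwards [self_mem_nhdsWithin] with t ht
          refine ⟨fun h => absurd h hj, fun _ => ?_⟩
          have : t * ∑ k, N.gradW S i j k * v k ≤ 0 :=
            mul_nonpos_of_nonneg_of_nonpos (le_of_lt ht) hc
          linarith
        · have hcont := tendsto_affine (N.pre i j x) (∑ k, N.gradW S i j k * v k)
          have hev := hcont.eventually_lt_const hlt
          filter_upwards [hev.filter_mono nhdsWithin_le_nhds] with t ht
          exact ⟨fun h => absurd h hj, fun _ => le_of_lt ht⟩
    have hall := Filter.eventually_all.mpr hper
    have hevD : ∀ᶠ t in nhdsWithin (0:ℝ) (Set.Ioi 0), x + t • v ∈ D := by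
      filter_upwards [hall, self_mem_nhdsWithin] with t htc ht0
      have hregt : N.preOK S N.L (x + t • v) := by
        apply N.preOK_of_linPre
        intro i hiL j
        exact htc ⟨⟨i, hiL⟩, j⟩
      have hbt : N.b (x + t • v) = N.b x + t * ∑ k, N.WbarOut S k * v k := by
        rw [N.b_linear S _ hregt, N.b_linear S x hOKx]
        unfold ReluNet.linB
        rw [sum_add_smul]
        ring
      show 0 ≤ N.b (x + t • v)
      rw [hbt, hbx]
      have : 0 ≤ t * ∑ k, N.WbarOut S k * v k := mul_nonneg (le_of_lt ht0) hg3
      linarith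
    show Filter.liminf (fun t : ℝ => eInfDist (x + t • v) D / t)
        (nhdsWithin 0 (Set.Ioi 0)) = 0
    have heq : (fun t : ℝ => eInfDist (x + t • v) D / t)
        =ᶠ[nhdsWithin (0:ℝ) (Set.Ioi 0)] (fun _ => (0:ℝ)) := by
      filter_upwards [hevD] with t ht
      rw [eInfDist_zero_of_mem ht, zero_div]
    rw [Filter.liminf_congr heq]
    exact Filter.liminf_const 0
open ReluNet in
/-- Lemma 2 / Nagumo tangency condition. For dynamics
`ẋ = f(x) + g(x) μ(x)`, the tangency condition `f(x) + g(x)μ(x) ∈ T_D(x)` holds at all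
`x ∈ ∂D` iff at every `x ∈ ∂D` there is `S ∈ S(x)` with
`(W̄_{i-1}(S) W_{ij})·(f(x)+g(x)μ(x)) ≥ 0` for `(i,j) ∈ T(x)` with `j ∈ S_i`,
`(W̄_{i-1}(S) W_{ij})·(f(x)+g(x)μ(x)) ≤ 0` for `(i,j) ∈ T(x)` with `j ∉ S_i`, and
`W̄(S)·(f(x)+g(x)μ(x)) ≥ 0`. -/
theorem stmt7 (N : ReluNet) {m : ℕ}
    (f : (Fin (N.d 0) → ℝ) → Fin (N.d 0) → ℝ)
    (g : (Fin (N.d 0) → ℝ) → Fin (N.d 0) → Fin m → ℝ)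
    (μ : (Fin (N.d 0) → ℝ) → Fin m → ℝ) :
    (∀ x ∈ frontier {y : Fin (N.d 0) → ℝ | 0 ≤ N.b y},
        (fun k => f x k + ∑ j, g x k j * μ x j) ∈
          tangentCone {y : Fin (N.d 0) → ℝ | 0 ≤ N.b y} x) ↔
      (∀ x ∈ frontier {y : Fin (N.d 0) → ℝ | 0 ≤ N.b y},
        ∃ S : N.ActSet, x ∈ N.region S ∧
          (∀ i < N.L, ∀ j : Fin (N.d (i + 1)), N.pre i j x = 0 → j ∈ S i →
              0 ≤ ∑ k, N.gradW S i j k * (f x k + ∑ j', g x k j' * μ x j')) ∧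
          (∀ i < N.L, ∀ j : Fin (N.d (i + 1)), N.pre i j x = 0 → j ∉ S i →
              (∑ k, N.gradW S i j k * (f x k + ∑ j', g x k j' * μ x j')) ≤ 0) ∧
          0 ≤ ∑ k, N.WbarOut S k * (f x k + ∑ j', g x k j' * μ x j')) := by
  refine forall₂_congr fun x hx => ?_
  exact ReluNet.main_iff N x (fun k => f x k + ∑ j, g x k j * μ x j) hx
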